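/- Let g be a smooth Riemannian metric on an open set U ⊆ E, let f : E → ℝ be smooth with g-gradient G satisfying G x ≠ 0 for all x ∈ U, and let λ : U → ℝ be smooth. Define Z : U → E by Z x := (g x (G x) (G x))⁻¹ • ((fderiv ℝ G x) (G x) + Γ^g x (G x) (G x) − λ x • G x), and define the Christoffel form Γ̃ by Γ̃ x u v := Γ^g x u v − (g x u v) • Z x. Then: (i) Γ̃ is symmetric, i.e. Γ̃ x u v = Γ̃ x v u for all x ∈ U, u v : E; (ii) Γ̃ straightens f with factor λ, i.e. (fderiv ℝ G x) (G x) + Γ̃ x (G x) (G x) = λ x • G x for all x ∈ U; and (iii) consequently every C¹ curve γ : ℝ → U with deriv γ t = G (γ t) for all t satisfies deriv (deriv γ) t + Γ̃ (γ t) (deriv γ t) (deriv γ t) = λ (γ t) • deriv γ t, i.e. every gradient curve of f is a pregeodesic of Γ̃. -/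

import Mathlib

open scoped Topology

noncomputable section

/-- `E n` is the Euclidean space `ℝ^n`. -/
abbrev E (n : ℕ) := EuclideanSpace ℝ (Fin n)

/-- **Theorem 1 (existence of a straightening connection).**
Given a smooth Riemannian metric `g` on an open set `U`, a smooth function `f` with nonvanishing
`g`-gradient `G` on `U`, and a smooth function `λ`, the connection
`Γ̃ x u v = Γ^g x u v − g x u v • Z x`, with `Z` as in Eq. (2) of the paper, is symmetric,
straightens `f` with factor `λ`, and hence every gradient curve of `f` is a pregeodesic of `Γ̃`. -/
theorem straightening_connection_exists
    (n : ℕ) (hn : 1 ≤ n)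
    (U : Set (E n)) (hU : IsOpen U)
    -- a smooth Riemannian metric on `U`
    (g : E n → E n →L[ℝ] E n →L[ℝ] ℝ)
    (hg_smooth : ContDiffOn ℝ (⊤ : ℕ∞) g U)
    (hg_symm : ∀ x ∈ U, ∀ u v : E n, g x u v = g x v u)
    (hg_pos : ∀ x ∈ U, ∀ v : E n, v ≠ 0 → 0 < g x v v)
    -- a smooth function `f` with `g`-gradient `G`, nonvanishing on `U`
    (f : E n → ℝ) (hf : ContDiff ℝ (⊤ : ℕ∞) f)
    (G : E n → E n) (hG_smooth : ContDiffOn ℝ (⊤ : ℕ∞) G U)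
    (hG : ∀ x ∈ U, ∀ v : E n, g x (G x) v = fderiv ℝ f x v)
    (hG_ne : ∀ x ∈ U, G x ≠ 0)
    -- a smooth factor `λ`
    (lam : E n → ℝ) (hlam : ContDiffOn ℝ (⊤ : ℕ∞) lam U)
    -- the Levi-Civita Christoffel form of `g`
    (Γg : E n → E n →L[ℝ] E n →L[ℝ] E n)
    (hΓg : ∀ x ∈ U, ∀ u v w : E n,
      2 * g x (Γg x u v) w
        = fderiv ℝ (fun y => g y v w) x u + fderiv ℝ (fun y => g y u w) x v
          - fderiv ℝ (fun y => g y u v) x w)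
    -- the vector field `Z` solving Eq. (2)
    (Z : E n → E n)
    (hZ : ∀ x ∈ U, Z x = (g x (G x) (G x))⁻¹ •
      (fderiv ℝ G x (G x) + Γg x (G x) (G x) - lam x • G x))
    -- the Christoffel form `Γ̃` of the straightening connection, Eq. (3)
    (Γt : E n → E n → E n → E n)
    (hΓt : ∀ x ∈ U, ∀ u v : E n, Γt x u v = Γg x u v - g x u v • Z x) :
    -- (i) `Γ̃` is symmetric
    (∀ x ∈ U, ∀ u v : E n, Γt x u v = Γt x v u) ∧
    -- (ii) `Γ̃` straightens `f` with factor `λ`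
    (∀ x ∈ U, fderiv ℝ G x (G x) + Γt x (G x) (G x) = lam x • G x) ∧
    -- (iii) every gradient curve of `f` is a pregeodesic of `Γ̃`
    (∀ γ : ℝ → E n, ContDiff ℝ 1 γ → (∀ t : ℝ, γ t ∈ U) →
      (∀ t : ℝ, deriv γ t = G (γ t)) →
      ∀ t : ℝ, deriv (deriv γ) t + Γt (γ t) (deriv γ t) (deriv γ t)
        = lam (γ t) • deriv γ t) := by

  -- nondegeneracy of `g`
  have hnd : ∀ x ∈ U, ∀ a : E n, (∀ w : E n, g x a w = 0) → a = 0 := by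
    intro x hx a ha
    by_contra h
    exact absurd (ha a) (ne_of_gt (hg_pos x hx a h))
  -- `Γg` is symmetric
  have hΓg_symm : ∀ x ∈ U, ∀ u v : E n, Γg x u v = Γg x v u := by
    intro x hx u v
    have hsub : Γg x u v - Γg x v u = 0 := by
      apply hnd x hx
      intro w
      have h1 := hΓg x hx u v w
      have h2 := hΓg x hx v u w
      have heq : fderiv ℝ (fun y => g y u v) x = fderiv ℝ (fun y => g y v u) x := by
        apply Filter.EventuallyEq.fderiv_eq
        filter_upwards [hU.mem_nhds hx] with y hy
        exact hg_symm y hy u v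
      rw [map_sub, ContinuousLinearMap.sub_apply]
      have : (2 : ℝ) * (g x (Γg x u v) w - g x (Γg x v u) w) = 0 := by
        rw [mul_sub, h1, h2, heq]; ring
      linarith
    have := sub_eq_zero.mp hsub
    exact this
  have hgGG : ∀ x ∈ U, g x (G x) (G x) ≠ 0 := fun x hx =>
    ne_of_gt (hg_pos x hx (G x) (hG_ne x hx))
  -- (ii)
  have hii : ∀ x ∈ U, fderiv ℝ G x (G x) + Γt x (G x) (G x) = lam x • G x := by
    intro x hx
    rw [hΓt x hx, hZ x hx, smul_smul, mul_inv_cancel₀ (hgGG x hx), one_smul]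
    abel
  refine ⟨?_, hii, ?_⟩
  · intro x hx u v
    rw [hΓt x hx, hΓt x hx, hΓg_symm x hx u v, hg_symm x hx u v]
  · intro γ hγ hγU hγG t
    have hγd : ∀ s, DifferentiableAt ℝ γ s := fun s =>
      (hγ.differentiable one_ne_zero).differentiableAt
    have hGd : DifferentiableAt ℝ G (γ t) :=
      (hG_smooth.contDiffAt (hU.mem_nhds (hγU t))).differentiableAt (by simp)
    have hcomp : HasDerivAt (fun s => G (γ s)) (fderiv ℝ G (γ t) (deriv γ t)) t :=
      hGd.hasFDerivAt.comp_hasDerivAt t (hγd t).hasDerivAt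
    have hfun : deriv γ = fun s => G (γ s) := funext hγG
    have hc := hcomp.deriv
    rw [hγG t] at hc
    have hdd : deriv (deriv γ) t = fderiv ℝ G (γ t) (G (γ t)) := by
      rw [hfun]; exact hc
    rw [hγG t, hdd]
    exact hii (γ t) (hγU t)


end
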